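/- Let G be a finite simple graph, d ≥ 1 an integer, and T a nonempty set of vertices of G such that at least 2d+2 vertices of V(G) ∖ T have neighborhood exactly T. Then T is monochromatic, and for every d-cut (A, B) of G and every vertex u with N(u) = T, either every edge between u and T belongs to E(A, B) or no edge between u and T belongs to E(A, B). -/
import Mathlib


variable {V : Type*}

/-- A `d`-cut of a simple graph `G`: a partition `(A, B)` of the vertex set into two
nonempty parts such that every vertex of `A` has at most `d` neighbors in `B` and
every vertex of `B` has at most `d` neighbors in `A`. -/
def IsDCut (G : SimpleGraph V) (d : ℕ) (A B : Set V) : Prop :=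
  A.Nonempty ∧ B.Nonempty ∧ Disjoint A B ∧ A ∪ B = Set.univ ∧
    (∀ v ∈ A, (G.neighborSet v ∩ B).ncard ≤ d) ∧
    (∀ v ∈ B, (G.neighborSet v ∩ A).ncard ≤ d)

/-- A vertex set `T` is monochromatic if every `d`-cut of `G` has `T` entirely on one side. -/
def Monochromatic (G : SimpleGraph V) (d : ℕ) (T : Set V) : Prop :=
  ∀ A B : Set V, IsDCut G d A B → T ⊆ A ∨ T ⊆ B

/-- The edge cut of a cut `(A, B)`: the set of edges of `G` with one endpoint in `A`
and the other endpoint in `B`. -/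
def edgeCut (G : SimpleGraph V) (A B : Set V) : Set (Sym2 V) :=
  {e | e ∈ G.edgeSet ∧ ∃ u v, e = s(u, v) ∧ u ∈ A ∧ v ∈ B}

/-- A minimal `d`-cut: no `d`-cut has an edge cut that is a proper subset of its edge cut. -/
def IsMinimalDCut (G : SimpleGraph V) (d : ℕ) (A B : Set V) : Prop :=
  IsDCut G d A B ∧ ∀ A' B' : Set V, IsDCut G d A' B' → ¬ edgeCut G A' B' ⊂ edgeCut G A B

/-- A maximal `d`-cut: no `d`-cut has an edge cut that properly contains its edge cut. -/
def IsMaximalDCut (G : SimpleGraph V) (d : ℕ) (A B : Set V) : Prop :=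
  IsDCut G d A B ∧ ∀ A' B' : Set V, IsDCut G d A' B' → ¬ edgeCut G A B ⊂ edgeCut G A' B'

/-- If at least `2d+2` vertices outside a nonempty set `T` have neighborhood exactly `T`,
then `T` is monochromatic and for every `d`-cut and every vertex `u` with `N(u) = T`,
either every edge between `u` and `T` crosses the cut, or none does. -/
theorem exact_neighborhood_mono_all_or_nothing [Fintype V] (G : SimpleGraph V) (d : ℕ)
    (hd : 1 ≤ d) (T : Set V) (hT : T.Nonempty)
    (hmany : 2 * d + 2 ≤ {v | v ∉ T ∧ G.neighborSet v = T}.ncard) :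
    Monochromatic G d T ∧
    (∀ A B : Set V, IsDCut G d A B → ∀ u : V, G.neighborSet u = T →
      ((∀ w ∈ T, s(u, w) ∈ edgeCut G A B) ∨ (∀ w ∈ T, s(u, w) ∉ edgeCut G A B))) := by
  set S := {v | v ∉ T ∧ G.neighborSet v = T} with hSdef
  have hmono : Monochromatic G d T := by
    intro A B hcut
    obtain ⟨hA, hB, hdisj, hcover, hdA, hdB⟩ := hcut
    by_contra h
    push_neg at h
    obtain ⟨h1, h2⟩ := h
    obtain ⟨a, haT, haA⟩ := Set.not_subset.mp h1
    obtain ⟨b, hbT, hbB⟩ := Set.not_subset.mp h2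
    have haB : a ∈ B := by
      have : a ∈ A ∪ B := hcover ▸ Set.mem_univ a
      rcases this with h | h
      · exact absurd h haA
      · exact h
    have hbA : b ∈ A := by
      have : b ∈ A ∪ B := hcover ▸ Set.mem_univ b
      rcases this with h | h
      · exact h
      · exact absurd h hbB
    have hSB : S ∩ B ⊆ G.neighborSet b ∩ B := by
      rintro v ⟨⟨hvT, hvN⟩, hvB⟩
      refine ⟨?_, hvB⟩
      have : b ∈ G.neighborSet v := hvN ▸ hbT
      exact (G.adj_symm this)
    have hSA : S ∩ A ⊆ G.neighborSet a ∩ A := by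
      rintro v ⟨⟨hvT, hvN⟩, hvA⟩
      refine ⟨?_, hvA⟩
      have : a ∈ G.neighborSet v := hvN ▸ haT
      exact (G.adj_symm this)
    have hfin : ∀ X : Set V, X.Finite := fun X => X.toFinite
    have h1' : (S ∩ B).ncard ≤ d :=
      le_trans (Set.ncard_le_ncard hSB (hfin _)) (hdA b hbA)
    have h2' : (S ∩ A).ncard ≤ d :=
      le_trans (Set.ncard_le_ncard hSA (hfin _)) (hdB a haB)
    have hsplit : S = (S ∩ A) ∪ (S ∩ B) := by
      rw [← Set.inter_union_distrib_left, hcover, Set.inter_univ]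
    have : S.ncard ≤ (S ∩ A).ncard + (S ∩ B).ncard := by
      have h := Set.ncard_union_le (S ∩ A) (S ∩ B)
      rwa [← hsplit] at h
    omega
  refine ⟨hmono, ?_⟩
  intro A B hcut u hu
  obtain ⟨hA, hB, hdisj, hcover, hdA, hdB⟩ := hcut
  have huAB : u ∈ A ∨ u ∈ B := by
    have : u ∈ A ∪ B := hcover ▸ Set.mem_univ u
    exact this
  have hTside := hmono A B ⟨hA, hB, hdisj, hcover, hdA, hdB⟩
  -- helper: same side means no crossing
  have same_side : ∀ (x w : V), x ∈ A → w ∈ A → s(x, w) ∉ edgeCut G A B := by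
    rintro x w hx hw ⟨-, p, q, heq, hpA, hqB⟩
    rcases Sym2.eq_iff.mp heq with ⟨rfl, rfl⟩ | ⟨rfl, rfl⟩
    · exact Set.disjoint_left.mp hdisj hw hqB
    · exact Set.disjoint_left.mp hdisj hx hqB
  have same_side' : ∀ (x w : V), x ∈ B → w ∈ B → s(x, w) ∉ edgeCut G A B := by
    rintro x w hx hw ⟨-, p, q, heq, hpA, hqB⟩
    rcases Sym2.eq_iff.mp heq with ⟨rfl, rfl⟩ | ⟨rfl, rfl⟩
    · exact Set.disjoint_left.mp hdisj hpA hx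
    · exact Set.disjoint_left.mp hdisj hpA hw
  have hadj : ∀ w ∈ T, G.Adj u w := fun w hw => (SimpleGraph.mem_neighborSet G u w).mp (hu.symm ▸ hw)
  rcases hTside with hTA | hTB
  · rcases huAB with huA | huB
    · exact Or.inr fun w hw => same_side u w huA (hTA hw)
    · refine Or.inl fun w hw => ⟨(G.mem_edgeSet).mpr (hadj w hw), w, u, Sym2.eq_swap, hTA hw, huB⟩
  · rcases huAB with huA | huB
    · refine Or.inl fun w hw => ⟨(G.mem_edgeSet).mpr (hadj w hw), u, w, rfl, huA, hTB hw⟩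
    · exact Or.inr fun w hw => same_side' u w huB (hTB hw)
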